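/- For a uniformly random r-to-one function f : Fin n → Fin N (r ≥ 2, r ∣ n) and any fixed set T of k distinct queried inputs, the probability that all k values f(i), i ∈ T, are distinct is at most exp(-(r-1)·k(k-1)/(2n)). Hence if k ≥ c·√(n/r) for suitable c, a collision among the queried values occurs with probability ≥ 2/3. -/

import Mathlib

open Finset

variable {n N r : ℕ}

/-- `f` is `r`-to-one -/
def Rto1 (r : ℕ) (f : Fin n → Fin N) : Prop :=
  ∀ y : Fin N, (∃ i, f i = y) → (Finset.univ.filter (fun i => f i = y)).card = r

lemma rto1_comp_perm (σ : Equiv.Perm (Fin n)) (f : Fin n → Fin N) (hf : Rto1 r f) :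
    Rto1 r (f ∘ σ) := by
  intro y hy
  have h1 : (∃ i, f i = y) := by obtain ⟨i, hi⟩ := hy; exact ⟨σ i, hi⟩
  have h2 : (Finset.univ.filter (fun i => (f ∘ σ) i = y)) =
      (Finset.univ.filter (fun i => f i = y)).map σ.symm.toEmbedding := by
    ext j
    simp only [mem_filter, mem_univ, true_and, Finset.mem_map, Equiv.coe_toEmbedding,
      Function.comp_apply]
    constructor
    · intro h; exact ⟨σ j, ⟨h, σ.symm_apply_apply j⟩⟩
    · rintro ⟨i, hi, rfl⟩; simpa using hi
  rw [h2, Finset.card_map]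
  exact hf y h1

lemma image_card_mul (f : Fin n → Fin N) (hf : Rto1 r f) :
    (Finset.univ.image f).card * r = n := by
  have h := Finset.card_eq_sum_card_image f (Finset.univ : Finset (Fin n))
  rw [Finset.card_univ, Fintype.card_fin] at h
  have h2 : ∀ y ∈ Finset.univ.image f,
      ((Finset.univ : Finset (Fin n)).filter (fun i => f i = y)).card = r := by
    intro y hy
    rw [Finset.mem_image] at hy
    obtain ⟨i, _, hi⟩ := hy
    exact hf y ⟨i, hi⟩
  rw [Finset.sum_congr rfl h2, Finset.sum_const, smul_eq_mul] at h
  omega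

lemma count_B (T : Finset (Fin n)) (f : Fin n → Fin N)
    (hf : ∀ y : Fin N, (∃ i, f i = y) → (Finset.univ.filter (fun i => f i = y)).card = r) :
    ((Finset.univ : Finset (↥T → Fin n)).filter (fun g => Function.Injective (f ∘ g))).card =
      ((Finset.univ.image f).card).descFactorial T.card * r ^ T.card := by
  classical
  set im := Finset.univ.image f with him
  set s := (Finset.univ : Finset (↥T → Fin n)).filter (fun g => Function.Injective (f ∘ g))
    with hs
  set t := (Finset.univ : Finset (↥T → Fin N)).filter
      (fun h => Function.Injective h ∧ ∀ u : ↥T, h u ∈ im) with ht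
  have hmap : ∀ g ∈ s, (fun u => f (g u)) ∈ t := by
    intro g hg
    rw [hs, Finset.mem_filter] at hg
    rw [ht, Finset.mem_filter]
    exact ⟨Finset.mem_univ _, hg.2, fun u => Finset.mem_image.2 ⟨g u, Finset.mem_univ _, rfl⟩⟩
  have hcount := Finset.card_eq_sum_card_fiberwise hmap
  -- each fiber has cardinality r ^ T.card
  have hfiber : ∀ h ∈ t, (s.filter (fun g => (fun u => f (g u)) = h)).card = r ^ T.card := by
    intro h hh
    rw [ht, Finset.mem_filter] at hh
    obtain ⟨-, hinj, hran⟩ := hh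
    have heq : s.filter (fun g => (fun u => f (g u)) = h) =
        (Finset.univ : Finset (↥T → Fin n)).filter (fun g => ∀ u, f (g u) = h u) := by
      ext g
      rw [hs]
      simp only [Finset.mem_filter, Finset.mem_univ, true_and, Finset.filter_filter]
      constructor
      · rintro ⟨-, hgh⟩
        intro u; exact congrFun hgh u
      · intro hgh
        refine ⟨?_, funext hgh⟩
        intro a b hab
        apply hinj
        simp only [Function.comp_apply] at hab
        rw [← hgh a, ← hgh b, hab]
    rw [heq, ← Fintype.card_subtype]
    have e : {g : ↥T → Fin n // ∀ u, f (g u) = h u} ≃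
        ∀ u : ↥T, {x : Fin n // f x = h u} :=
      Equiv.subtypePiEquivPi (p := fun (u : ↥T) (x : Fin n) => f x = h u)
    rw [Fintype.card_congr e, Fintype.card_pi]
    have hc : ∀ u : ↥T, Fintype.card {x : Fin n // f x = h u} = r := by
      intro u
      rw [Fintype.card_subtype]
      have : h u ∈ im := hran u
      rw [him, Finset.mem_image] at this
      obtain ⟨i, -, hi⟩ := this
      exact hf _ ⟨i, hi⟩
    rw [Finset.prod_congr rfl (fun u _ => hc u), Finset.prod_const, Finset.card_univ,
      Fintype.card_coe]
  -- t has cardinality descFactorial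
  have htcard : t.card = im.card.descFactorial T.card := by
    rw [← Fintype.card_subtype]
    have e : {h : ↥T → Fin N // Function.Injective h ∧ ∀ u : ↥T, h u ∈ im} ≃ (↥T ↪ ↥im) :=
      { toFun := fun h => ⟨fun u => ⟨h.1 u, h.2.2 u⟩, fun a b hab =>
          h.2.1 (congrArg Subtype.val hab)⟩
        invFun := fun e => ⟨fun u => (e u).1,
          fun a b hab => e.injective (Subtype.ext hab), fun u => (e u).2⟩
        left_inv := fun h => rfl
        right_inv := fun e => by ext u; rfl }
    rw [Fintype.card_congr e, Fintype.card_embedding_eq, Fintype.card_coe, Fintype.card_coe]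
  rw [hcount, Finset.sum_congr rfl hfiber, Finset.sum_const, smul_eq_mul, htcard]

lemma count_inj_congr (S S' : Finset (Fin n)) (hc : S.card = S'.card) :
    ((Finset.univ : Finset (Fin n → Fin N)).filter (fun f =>
      (∀ y : Fin N, (∃ i, f i = y) → (Finset.univ.filter (fun i => f i = y)).card = r)
      ∧ ∀ i ∈ S, ∀ j ∈ S, f i = f j → i = j)).card =
    ((Finset.univ : Finset (Fin n → Fin N)).filter (fun f =>
      (∀ y : Fin N, (∃ i, f i = y) → (Finset.univ.filter (fun i => f i = y)).card = r)
      ∧ ∀ i ∈ S', ∀ j ∈ S', f i = f j → i = j)).card := by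
  classical
  have hcard : Fintype.card {x // x ∈ S'} = Fintype.card {x // x ∈ S} := by
    rw [Fintype.card_coe, Fintype.card_coe, hc]
  let e : {x // x ∈ S'} ≃ {x // x ∈ S} := Fintype.equivOfCardEq hcard
  let σ : Equiv.Perm (Fin n) := e.extendSubtype
  have hmem : ∀ x : Fin n, x ∈ S' ↔ σ x ∈ S := by
    intro x
    constructor
    · intro hx; exact e.extendSubtype_mem x hx
    · intro hx
      by_contra hx'
      exact e.extendSubtype_not_mem x hx' hx
  have key : ∀ (f : Fin n → Fin N),
      ((∀ y : Fin N, (∃ i, f i = y) → (Finset.univ.filter (fun i => f i = y)).card = r)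
        ∧ ∀ i ∈ S, ∀ j ∈ S, f i = f j → i = j) →
      ((∀ y : Fin N, (∃ i, (f ∘ σ) i = y) →
          (Finset.univ.filter (fun i => (f ∘ σ) i = y)).card = r)
        ∧ ∀ i ∈ S', ∀ j ∈ S', (f ∘ σ) i = (f ∘ σ) j → i = j) := by
    intro f ⟨h1, h2⟩
    refine ⟨rto1_comp_perm σ f h1, ?_⟩
    intro i hi j hj hij
    have := h2 (σ i) ((hmem i).1 hi) (σ j) ((hmem j).1 hj) hij
    exact σ.injective this
  have hmem' : ∀ x : Fin n, x ∈ S ↔ σ.symm x ∈ S' := by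
    intro x
    rw [hmem (σ.symm x), σ.apply_symm_apply]
  have key' : ∀ (f : Fin n → Fin N),
      ((∀ y : Fin N, (∃ i, f i = y) → (Finset.univ.filter (fun i => f i = y)).card = r)
        ∧ ∀ i ∈ S', ∀ j ∈ S', f i = f j → i = j) →
      ((∀ y : Fin N, (∃ i, (f ∘ σ.symm) i = y) →
          (Finset.univ.filter (fun i => (f ∘ σ.symm) i = y)).card = r)
        ∧ ∀ i ∈ S, ∀ j ∈ S, (f ∘ σ.symm) i = (f ∘ σ.symm) j → i = j) := by
    intro f ⟨h1, h2⟩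
    refine ⟨rto1_comp_perm σ.symm f h1, ?_⟩
    intro i hi j hj hij
    have := h2 (σ.symm i) ((hmem' i).1 hi) (σ.symm j) ((hmem' j).1 hj) hij
    exact σ.symm.injective this
  refine Finset.card_nbij' (fun f => f ∘ σ) (fun f => f ∘ σ.symm) ?_ ?_ ?_ ?_
  · intro f hf
    rw [Finset.mem_coe, Finset.mem_filter] at hf ⊢
    exact ⟨Finset.mem_univ _, key f hf.2⟩
  · intro f hf
    rw [Finset.mem_coe, Finset.mem_filter] at hf ⊢
    exact ⟨Finset.mem_univ _, key' f hf.2⟩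
  · intro f _
    funext x
    simp
  · intro f _
    funext x
    simp
lemma count_main (T : Finset (Fin n)) (hr : 0 < r) :
    ((Finset.univ : Finset (Fin n → Fin N)).filter (fun f =>
        (∀ y : Fin N, (∃ i, f i = y) → (Finset.univ.filter (fun i => f i = y)).card = r)
        ∧ ∀ i ∈ T, ∀ j ∈ T, f i = f j → i = j)).card * n.descFactorial T.card =
    ((Finset.univ : Finset (Fin n → Fin N)).filter (fun f =>
        ∀ y : Fin N, (∃ i, f i = y) →
          (Finset.univ.filter (fun i => f i = y)).card = r)).card *
      ((n / r).descFactorial T.card * r ^ T.card) := by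
  classical
  set P : (Fin n → Fin N) → Prop := fun f =>
    ∀ y : Fin N, (∃ i, f i = y) → (Finset.univ.filter (fun i => f i = y)).card = r with hP
  set F := (Finset.univ : Finset (Fin n → Fin N)).filter P with hF
  set E := (Finset.univ : Finset (↥T ↪ Fin n)) with hE
  set k := T.card with hk
  -- step 2 : each e-section has cardinality Num
  have step2 : ∀ e ∈ E, (F.filter (fun f => Function.Injective (f ∘ ⇑e))).card =
      ((Finset.univ : Finset (Fin n → Fin N)).filter (fun f =>
        P f ∧ ∀ i ∈ T, ∀ j ∈ T, f i = f j → i = j)).card := by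
    intro e _
    set S := (Finset.univ : Finset ↥T).map e with hS
    have hcond : ∀ f : Fin n → Fin N,
        Function.Injective (f ∘ ⇑e) ↔ (∀ i ∈ S, ∀ j ∈ S, f i = f j → i = j) := by
      intro f
      constructor
      · rintro hinj i hi j hj hij
        rw [hS, Finset.mem_map] at hi hj
        obtain ⟨a, -, rfl⟩ := hi
        obtain ⟨b, -, rfl⟩ := hj
        exact congrArg e (hinj hij)
      · intro h a b hab
        apply e.injective
        exact h (e a) (by simp [hS]) (e b) (by simp [hS]) hab
    have : F.filter (fun f => Function.Injective (f ∘ ⇑e)) =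
        (Finset.univ : Finset (Fin n → Fin N)).filter
          (fun f => P f ∧ ∀ i ∈ S, ∀ j ∈ S, f i = f j → i = j) := by
      rw [hF, Finset.filter_filter]
      exact Finset.filter_congr (fun f _ => by rw [hcond f])
    rw [this]
    exact count_inj_congr S T (by rw [hS, Finset.card_map, Finset.card_univ, Fintype.card_coe])
  -- step 4 : each f-section has cardinality V
  have step4 : ∀ f ∈ F, (E.filter (fun (e : ↥T ↪ Fin n) => Function.Injective (f ∘ ⇑e))).card =
      (n / r).descFactorial k * r ^ k := by
    intro f hf
    rw [hF, Finset.mem_filter] at hf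
    have himg : (Finset.univ.image f).card = n / r := by
      have h := image_card_mul f hf.2
      have h2 : (Finset.univ.image f).card * r / r = n / r := by rw [h]
      rwa [Nat.mul_div_cancel _ hr] at h2
    have hbij : (E.filter (fun (e : ↥T ↪ Fin n) => Function.Injective (f ∘ ⇑e))).card =
        ((Finset.univ : Finset (↥T → Fin n)).filter
          (fun g => Function.Injective (f ∘ g))).card := by
      refine Finset.card_bij' (fun e _ => (e : ↥T → Fin n))
        (fun g hg => ⟨g, ?_⟩) ?_ ?_ ?_ ?_
      · rw [Finset.mem_filter] at hg
        intro a b hab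
        exact hg.2 (congrArg f hab)
      · intro e he
        rw [Finset.mem_filter] at he ⊢
        exact ⟨Finset.mem_univ _, he.2⟩
      · intro g hg
        rw [Finset.mem_filter] at hg ⊢
        exact ⟨Finset.mem_univ _, hg.2⟩
      · intro e _; ext x; rfl
      · intro g _; rfl
    rw [hbij, count_B T f hf.2, himg]
  -- double counting
  have hdc : ∑ e ∈ E, (F.filter (fun f => Function.Injective (f ∘ ⇑e))).card =
      ∑ f ∈ F, (E.filter (fun (e : ↥T ↪ Fin n) => Function.Injective (f ∘ ⇑e))).card := by
    simp only [Finset.card_filter]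
    exact Finset.sum_comm
  rw [Finset.sum_congr rfl step2, Finset.sum_congr rfl step4, Finset.sum_const,
    Finset.sum_const, smul_eq_mul, smul_eq_mul] at hdc
  have hEcard : E.card = n.descFactorial k := by
    rw [hE, Finset.card_univ, Fintype.card_embedding_eq, Fintype.card_fin, Fintype.card_coe]
  rw [hEcard] at hdc
  rw [mul_comm _ (n.descFactorial (T.card))]
  exact hdc

lemma exists_rto1 (hn : 0 < n) (hr : 0 < r) (hd : r ∣ n) (hN : n / r ≤ N) :
    0 < ((Finset.univ : Finset (Fin n → Fin N)).filter (fun f =>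
        ∀ y : Fin N, (∃ i, f i = y) →
          (Finset.univ.filter (fun i => f i = y)).card = r)).card := by
  classical
  have hNpos : 0 < N := lt_of_lt_of_le (Nat.div_pos (Nat.le_of_dvd hn hd) hr) hN
  have hlt : ∀ i : Fin n, (i : ℕ) / r < N := by
    intro i
    exact lt_of_lt_of_le (Nat.div_lt_div_of_lt_of_dvd hd i.2) hN
  set f : Fin n → Fin N := fun i => ⟨(i : ℕ) / r, hlt i⟩ with hfdef
  rw [Finset.card_pos]
  refine ⟨f, Finset.mem_filter.2 ⟨Finset.mem_univ _, ?_⟩⟩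
  intro y hy
  obtain ⟨i₀, hi₀⟩ := hy
  set q := (y : ℕ) with hq
  have hqval : (i₀ : ℕ) / r = q := congrArg Fin.val hi₀
  have hqlt : q < n / r := by
    rw [← hqval]
    exact Nat.div_lt_div_of_lt_of_dvd hd i₀.2
  have hqr : q * r + r ≤ n := by
    have : (q + 1) * r ≤ (n / r) * r := Nat.mul_le_mul_right r hqlt
    rwa [Nat.div_mul_cancel hd, add_mul, one_mul] at this
  have hmem : ∀ j : Fin r, q * r + (j : ℕ) < n := fun j =>
    lt_of_lt_of_le (by omega : q * r + (j : ℕ) < q * r + r) hqr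
  have himg : Finset.univ.filter (fun i => f i = y) =
      Finset.image (fun j : Fin r => (⟨q * r + (j : ℕ), hmem j⟩ : Fin n)) Finset.univ := by
    ext i
    simp only [Finset.mem_filter, Finset.mem_univ, true_and, Finset.mem_image]
    constructor
    · intro hi
      have hdiv : (i : ℕ) / r = q := congrArg Fin.val hi
      have hmod := Nat.div_add_mod (i : ℕ) r
      have hmodlt : (i : ℕ) % r < r := Nat.mod_lt _ hr
      refine ⟨⟨(i : ℕ) % r, hmodlt⟩, Fin.ext ?_⟩
      show q * r + ((⟨(i : ℕ) % r, hmodlt⟩ : Fin r) : ℕ) = (i : ℕ)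
      simp only [Fin.val_mk]
      rw [← hdiv, mul_comm]
      exact Nat.div_add_mod _ _
    · rintro ⟨j, rfl⟩
      apply Fin.ext
      show (q * r + (j : ℕ)) / r = q
      rw [add_comm, Nat.add_mul_div_right _ _ hr, Nat.div_eq_of_lt j.2, zero_add]
  rw [himg, Finset.card_image_of_injective _ (fun a b hab => by
      have : q * r + (a : ℕ) = q * r + (b : ℕ) := congrArg Fin.val hab
      exact Fin.ext (by omega)), Finset.card_univ, Fintype.card_fin]

lemma ratio_le (k : ℕ) (hn : 0 < n) (hr : 2 ≤ r) (hd : r ∣ n) (hk : k ≤ n) :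
    (((n / r).descFactorial k * r ^ k : ℕ) : ℝ) / ((n.descFactorial k : ℕ) : ℝ) ≤
      Real.exp (-(((r : ℝ) - 1) * (k : ℝ) * ((k : ℝ) - 1)) / (2 * (n : ℝ))) := by
  have hr0 : 0 < r := by omega
  -- rewrite numerator as a product
  have hV : (n / r).descFactorial k * r ^ k = ∏ i ∈ Finset.range k, (n - i * r) := by
    rw [Nat.descFactorial_eq_prod_range,
      show r ^ k = ∏ _i ∈ Finset.range k, r by rw [Finset.prod_const, Finset.card_range],
      ← Finset.prod_mul_distrib]
    refine Finset.prod_congr rfl ?_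
    intro i _
    rw [Nat.sub_mul, Nat.div_mul_cancel hd]
  have hnpos : (0:ℝ) < n := by exact_mod_cast hn
  rw [hV, Nat.descFactorial_eq_prod_range n k, Nat.cast_prod, Nat.cast_prod,
    ← Finset.prod_div_distrib]
  have hfac : ∀ i ∈ Finset.range k, ((n - i * r : ℕ) : ℝ) / ((n - i : ℕ) : ℝ) ≤
      Real.exp (-(((r : ℝ) - 1) * (i : ℝ)) / (n : ℝ)) := by
    intro i hi
    rw [Finset.mem_range] at hi
    have hin : i < n := lt_of_lt_of_le hi hk
    have hinR : (i : ℝ) < (n : ℝ) := by exact_mod_cast hin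
    have hden : ((n - i : ℕ) : ℝ) = (n : ℝ) - (i : ℝ) := by
      rw [Nat.cast_sub (le_of_lt hin)]
    have hdenpos : (0:ℝ) < ((n - i : ℕ) : ℝ) := by rw [hden]; linarith
    by_cases hc : n ≤ i * r
    · rw [Nat.sub_eq_zero_of_le hc, Nat.cast_zero, zero_div]
      exact le_of_lt (Real.exp_pos _)
    · push_neg at hc
      have hnum : ((n - i * r : ℕ) : ℝ) = (n : ℝ) - (i : ℝ) * (r : ℝ) := by
        rw [Nat.cast_sub (le_of_lt hc)]; push_cast; ring
      set x : ℝ := -(((r : ℝ) - 1) * (i : ℝ)) / (n : ℝ) with hx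
      have hrR : (2:ℝ) ≤ (r:ℝ) := by exact_mod_cast hr
      have hiR : (0:ℝ) ≤ (i:ℝ) := Nat.cast_nonneg i
      have key : ((n:ℝ) - (i:ℝ)*(r:ℝ)) * (n:ℝ) ≤
          ((n:ℝ) - ((r:ℝ)-1)*(i:ℝ)) * ((n:ℝ) - (i:ℝ)) := by
        nlinarith [mul_nonneg (by linarith : (0:ℝ) ≤ (r:ℝ) - 1) (sq_nonneg (i:ℝ))]
      have h1x : 1 + x = ((n:ℝ) - ((r:ℝ)-1)*(i:ℝ)) / (n:ℝ) := by
        rw [hx]; field_simp; ring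
      have hstep : ((n:ℝ) - (i:ℝ)*(r:ℝ)) ≤ (1 + x) * ((n:ℝ) - (i:ℝ)) := by
        rw [h1x, div_mul_eq_mul_div, le_div_iff₀ hnpos]
        linarith [key]
      have hexp : x + 1 ≤ Real.exp x := Real.add_one_le_exp x
      rw [div_le_iff₀ hdenpos, hnum, hden]
      calc (n:ℝ) - (i:ℝ)*(r:ℝ) ≤ (1 + x) * ((n:ℝ) - (i:ℝ)) := hstep
        _ ≤ Real.exp x * ((n:ℝ) - (i:ℝ)) := by
            apply mul_le_mul_of_nonneg_right (by linarith) (by linarith)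
  refine le_trans (Finset.prod_le_prod ?_ hfac) ?_
  · intro i _
    exact div_nonneg (Nat.cast_nonneg _) (Nat.cast_nonneg _)
  · rw [← Real.exp_sum]
    apply le_of_eq
    congr 1
    have hsum2 : (∑ i ∈ Finset.range k, (i:ℝ)) * 2 = (k:ℝ) * ((k:ℝ) - 1) := by
      cases k with
      | zero => simp
      | succ m =>
        have h := Finset.sum_range_id_mul_two (m + 1)
        have h2 : ((∑ i ∈ Finset.range (m+1), i) * 2 : ℕ) = ((m+1) * m : ℕ) := by
          rw [h]; simp
        have h3 : (((∑ i ∈ Finset.range (m+1), i) * 2 : ℕ) : ℝ) = (((m+1) * m : ℕ) : ℝ) := by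
          exact_mod_cast h2
        push_cast at h3
        push_cast
        linarith [h3]
    have hs : (∑ i ∈ Finset.range k, (i:ℝ)) = (k:ℝ) * ((k:ℝ) - 1) / 2 := by linarith
    have : ∑ i ∈ Finset.range k, (-(((r : ℝ) - 1) * (i : ℝ)) / (n : ℝ)) =
        (-((r:ℝ)-1) * ∑ i ∈ Finset.range k, (i:ℝ)) / (n:ℝ) := by
      rw [Finset.mul_sum, ← Finset.sum_div]
      congr 1
      refine Finset.sum_congr rfl (fun i _ => by ring)
    rw [this, hs]
    ring

theorem random_rtoone_collision_probability :
    ∃ c : ℝ, 0 < c ∧ ∀ (n N r k : ℕ), 0 < n → 2 ≤ r → r ∣ n → n / r ≤ N →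
      ∀ T : Finset (Fin n), T.card = k →
      ((((Finset.univ.filter (fun f : Fin n → Fin N =>
            (∀ y : Fin N, (∃ i, f i = y) →
              (Finset.univ.filter (fun i => f i = y)).card = r)
            ∧ ∀ i ∈ T, ∀ j ∈ T, f i = f j → i = j)).card : ℝ) /
        ((Finset.univ.filter (fun f : Fin n → Fin N =>
            ∀ y : Fin N, (∃ i, f i = y) →
              (Finset.univ.filter (fun i => f i = y)).card = r)).card : ℝ))
        ≤ Real.exp (-(((r : ℝ) - 1) * (k : ℝ) * ((k : ℝ) - 1)) / (2 * (n : ℝ))))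
      ∧ (c * Real.sqrt ((n : ℝ) / (r : ℝ)) ≤ (k : ℝ) →
          (2 : ℝ) / 3 ≤ 1 -
            (((Finset.univ.filter (fun f : Fin n → Fin N =>
                (∀ y : Fin N, (∃ i, f i = y) →
                  (Finset.univ.filter (fun i => f i = y)).card = r)
                ∧ ∀ i ∈ T, ∀ j ∈ T, f i = f j → i = j)).card : ℝ) /
              ((Finset.univ.filter (fun f : Fin n → Fin N =>
                  ∀ y : Fin N, (∃ i, f i = y) →
                    (Finset.univ.filter (fun i => f i = y)).card = r)).card : ℝ))) := by
  classical
  refine ⟨4, by norm_num, ?_⟩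
  intro n N r k hn hr hd hN T hT
  subst hT
  have hr0 : 0 < r := by omega
  have hkn : T.card ≤ n := by
    have := Finset.card_le_univ T
    rwa [Fintype.card_fin] at this
  have hD := exists_rto1 (N := N) hn hr0 hd hN
  have hI : 0 < n.descFactorial T.card :=
    Nat.pos_of_ne_zero fun h =>
      absurd (Nat.descFactorial_eq_zero_iff_lt.1 h) (not_lt.2 hkn)
  have hmain := count_main (N := N) T hr0
  set Num := ((Finset.univ : Finset (Fin n → Fin N)).filter (fun f =>
      (∀ y : Fin N, (∃ i, f i = y) →
        (Finset.univ.filter (fun i => f i = y)).card = r)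
      ∧ ∀ i ∈ T, ∀ j ∈ T, f i = f j → i = j)).card with hNum
  set D := ((Finset.univ : Finset (Fin n → Fin N)).filter (fun f =>
      ∀ y : Fin N, (∃ i, f i = y) →
        (Finset.univ.filter (fun i => f i = y)).card = r)).card with hDdef
  have hDR : (0:ℝ) < (D:ℝ) := by exact_mod_cast hD
  have hIR : (0:ℝ) < (n.descFactorial T.card : ℝ) := by exact_mod_cast hI
  have hratio : (Num : ℝ) / (D : ℝ) =
      (((n / r).descFactorial T.card * r ^ T.card : ℕ) : ℝ) /
        ((n.descFactorial T.card : ℕ) : ℝ) := by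
    rw [div_eq_div_iff (ne_of_gt hDR) (ne_of_gt hIR)]
    exact_mod_cast hmain.trans (mul_comm D _)
  have part1 : (Num : ℝ) / (D : ℝ) ≤
      Real.exp (-(((r : ℝ) - 1) * (T.card : ℝ) * ((T.card : ℝ) - 1)) / (2 * (n : ℝ))) := by
    rw [hratio]
    exact ratio_le T.card hn hr hd hkn
  refine ⟨part1, ?_⟩
  intro hc
  set kR : ℝ := (T.card : ℝ) with hkR
  have hrn : r ≤ n := Nat.le_of_dvd hn hd
  have hnR : (0:ℝ) < (n:ℝ) := by exact_mod_cast hn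
  have hrR : (2:ℝ) ≤ (r:ℝ) := by exact_mod_cast hr
  have hrpos : (0:ℝ) < (r:ℝ) := by linarith
  have hx1 : (1:ℝ) ≤ (n:ℝ) / (r:ℝ) := by
    rw [le_div_iff₀ hrpos, one_mul]
    exact_mod_cast hrn
  have hx0 : (0:ℝ) ≤ (n:ℝ) / (r:ℝ) := by linarith
  have hsqrt1 : (1:ℝ) ≤ Real.sqrt ((n:ℝ)/(r:ℝ)) := by
    rw [show (1:ℝ) = Real.sqrt 1 by simp]
    exact Real.sqrt_le_sqrt hx1
  have hk4 : (4:ℝ) ≤ kR := by nlinarith [hc, hsqrt1]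
  have hsq : 16 * ((n:ℝ)/(r:ℝ)) ≤ kR ^ 2 := by
    have h1 : (4 * Real.sqrt ((n:ℝ)/(r:ℝ))) ^ 2 ≤ kR ^ 2 := by
      apply pow_le_pow_left₀ (by positivity) hc
    rw [mul_pow, Real.sq_sqrt hx0] at h1
    linarith
  have h16 : 16 * (n:ℝ) ≤ (r:ℝ) * kR ^ 2 := by
    have := mul_le_mul_of_nonneg_right hsq (le_of_lt hrpos)
    rw [mul_assoc, div_mul_cancel₀ _ (ne_of_gt hrpos)] at this
    linarith
  have hE : (3:ℝ) ≤ (((r:ℝ) - 1) * kR * (kR - 1)) / (2 * (n:ℝ)) := by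
    rw [le_div_iff₀ (by linarith : (0:ℝ) < 2 * (n:ℝ))]
    nlinarith [h16, hk4, hrR, hnR, mul_nonneg (by linarith : (0:ℝ) ≤ (r:ℝ) - 2)
      (mul_nonneg (by linarith : (0:ℝ) ≤ kR) (by linarith : (0:ℝ) ≤ kR - 1)),
      mul_nonneg (by linarith : (0:ℝ) ≤ (r:ℝ) - 2) (sq_nonneg kR)]
  have hexp3 : Real.exp (-(((r:ℝ) - 1) * kR * (kR - 1)) / (2 * (n:ℝ))) ≤ Real.exp (-3) := by
    apply Real.exp_le_exp.2
    rw [neg_div]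
    linarith
  have hexp13 : Real.exp (-3) ≤ 1/3 := by
    have h3 : (3:ℝ) + 1 ≤ Real.exp 3 := Real.add_one_le_exp 3
    rw [Real.exp_neg, one_div]
    exact inv_anti₀ (by norm_num) (by linarith)
  have hp13 : (Num : ℝ) / (D : ℝ) ≤ 1/3 := le_trans part1 (le_trans hexp3 hexp13)
  linarith
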